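/- There exists a constant C such that for all x ∈ ℝ³ and all ρ with 1 < ρ ≤ 2|x|/3, the surface integral over the sphere {|y| = ρ} satisfies ∫_{|y|=ρ} e^{−|x−y|−|y|} dτ_y ≤ C ρ e^{−|x|}. -/

import Mathlib

set_option autoImplicit false

open MeasureTheory
open scoped RealInnerProductSpace ENNReal NNReal

noncomputable abbrev E3 := EuclideanSpace ℝ (Fin 3)

set_option maxHeartbeats 1000000 in
lemma cap_bound (ρ c : ℝ) (hρ : 0 < ρ) (hc : 1/2 ≤ c) (hc1 : c ≤ 1)
    (e : E3) (he : ‖e‖ = 1) :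
    μH[2] {y : E3 | ‖y‖ = ρ ∧ c * ρ ≤ ⟪e, y⟫} ≤ ENNReal.ofReal (100 * ((1 - c^2) * ρ^2)) := by
  -- orthonormal basis with b 0 = e
  have hv : Orthonormal ℝ (({0} : Set (Fin 3)).restrict (fun _ : Fin 3 => e)) := by
    constructor
    · intro i; exact he
    · intro i j hij; exact absurd (Subsingleton.elim i j) hij
  obtain ⟨b, hb⟩ := hv.exists_orthonormalBasis_extension_of_card_eq (by simp)
  have hb0 : b 0 = e := hb 0 rfl
  set r2 : ℝ := (1 - c^2) * ρ^2 with hr2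
  have hr2nn : 0 ≤ r2 := mul_nonneg (by nlinarith) (by positivity)
  set D : Set (Fin 2 → ℝ) := {v | (v 0)^2 + (v 1)^2 ≤ r2} with hD
  set h : (Fin 2 → ℝ) → ℝ := fun v => Real.sqrt (ρ^2 - ((v 0)^2 + (v 1)^2)) with hh
  set f : (Fin 2 → ℝ) → E3 := fun v =>
    b.repr.symm ((WithLp.equiv 2 (Fin 3 → ℝ)).symm ![h v, v 0, v 1]) with hf
  have hcρ : 0 < c * ρ := by positivity
  -- subset
  have hsub : {y : E3 | ‖y‖ = ρ ∧ c * ρ ≤ ⟪e, y⟫} ⊆ f '' D := by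
    rintro y ⟨hy1, hy2⟩
    set w : EuclideanSpace ℝ (Fin 3) := b.repr y with hw
    have hwy : ∀ i, w i = ⟪b i, y⟫ := fun i => b.repr_apply_apply y i
    have hw0 : c * ρ ≤ w 0 := by rw [hwy 0, hb0]; exact hy2
    have hw0' : 0 ≤ w 0 := le_trans hcρ.le hw0
    have hsum : (w 0)^2 + ((w 1)^2 + (w 2)^2) = ρ^2 := by
      have hn : ‖w‖ = ρ := by rw [hw, b.repr.norm_map, hy1]
      have h2 : ‖w‖^2 = ρ^2 := by rw [hn]
      rw [EuclideanSpace.norm_eq] at h2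
      rw [Real.sq_sqrt (by positivity)] at h2
      rw [Fin.sum_univ_three] at h2
      simpa [sq_abs, add_assoc] using h2
    refine ⟨![w 1, w 2], ?_, ?_⟩
    · show (w 1)^2 + (w 2)^2 ≤ r2
      rw [hr2]
      nlinarith [sq_nonneg (w 0 - c * ρ), mul_le_mul_of_nonneg_left hw0 hcρ.le]
    · have hhv : h ![w 1, w 2] = w 0 := by
        show Real.sqrt (ρ^2 - ((w 1)^2 + (w 2)^2)) = w 0
        rw [show ρ^2 - ((w 1)^2 + (w 2)^2) = (w 0)^2 by linarith]
        exact Real.sqrt_sq hw0'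
      apply b.repr.injective
      rw [hf]
      simp only [LinearIsometryEquiv.apply_symm_apply]
      ext i
      fin_cases i <;>
        simp [hhv, ← hw]
  refine le_trans (measure_mono hsub) ?_
  have hsqD : ∀ z ∈ D, ∀ i : Fin 2, (z i)^2 ≤ r2 := by
    intro z hz i
    have hzz : (z 0)^2 + (z 1)^2 ≤ r2 := hz
    have h0 : (z 0)^2 ≤ r2 := by nlinarith [sq_nonneg (z 1)]
    have h1 : (z 1)^2 ≤ r2 := by nlinarith [sq_nonneg (z 0)]
    fin_cases i
    · exact h0
    · exact h1
  have hcoord : ∀ z ∈ D, ∀ i : Fin 2, |z i| ≤ ρ := by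
    intro z hz i
    have h1 : (z i)^2 ≤ ρ^2 := by
      refine le_trans (hsqD z hz i) ?_
      rw [hr2]; nlinarith [mul_nonneg (show (0:ℝ) ≤ c^2 by positivity) (sq_nonneg ρ)]
    calc |z i| = Real.sqrt ((z i)^2) := (Real.sqrt_sq_eq_abs _).symm
      _ ≤ Real.sqrt (ρ^2) := Real.sqrt_le_sqrt h1
      _ = ρ := Real.sqrt_sq hρ.le
  -- Lipschitz bound
  have hlip : LipschitzOnWith 5 f D := by
    apply LipschitzOnWith.of_dist_le_mul
    intro v hv' u hu'
    set d := dist v u with hdd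
    have hd : ∀ i, |v i - u i| ≤ d := by
      intro i
      rw [← Real.dist_eq]
      exact dist_le_pi_dist v u i
    have hdnn : 0 ≤ d := dist_nonneg
    have hAB : ∀ z ∈ D, (c*ρ)^2 ≤ ρ^2 - ((z 0)^2 + (z 1)^2) := by
      intro z hz
      have hzz : (z 0)^2 + (z 1)^2 ≤ r2 := hz
      rw [hr2] at hzz; nlinarith
    have hsA : c * ρ ≤ h v := by
      rw [hh]
      calc c * ρ = Real.sqrt ((c*ρ)^2) := (Real.sqrt_sq hcρ.le).symm
        _ ≤ _ := Real.sqrt_le_sqrt (hAB v hv')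
    have hsB : c * ρ ≤ h u := by
      rw [hh]
      calc c * ρ = Real.sqrt ((c*ρ)^2) := (Real.sqrt_sq hcρ.le).symm
        _ ≤ _ := Real.sqrt_le_sqrt (hAB u hu')
    have hρ2 : ρ ≤ h v + h u := by nlinarith
    have hΔh : |h v - h u| ≤ 4 * d := by
      have hv2 : h v ^ 2 = ρ^2 - ((v 0)^2 + (v 1)^2) := by
        rw [hh]; exact Real.sq_sqrt (le_trans (by positivity) (hAB v hv'))
      have hu2 : h u ^ 2 = ρ^2 - ((u 0)^2 + (u 1)^2) := by
        rw [hh]; exact Real.sq_sqrt (le_trans (by positivity) (hAB u hu'))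
      have hprod : |h v - h u| * (h v + h u) = |((u 0)^2 + (u 1)^2) - ((v 0)^2 + (v 1)^2)| := by
        rw [← abs_of_nonneg (show (0:ℝ) ≤ h v + h u by nlinarith), ← abs_mul]
        congr 1
        nlinarith [hv2, hu2]
      have hq : |((u 0)^2 + (u 1)^2) - ((v 0)^2 + (v 1)^2)| ≤ 4 * ρ * d := by
        have e0 : |(u 0)^2 - (v 0)^2| ≤ 2 * ρ * d := by
          rw [sq_sub_sq, abs_mul]
          have h1 : |u 0 + v 0| ≤ 2 * ρ :=
            le_trans (abs_add_le _ _) (by linarith [hcoord v hv' 0, hcoord u hu' 0])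
          have h2 : |u 0 - v 0| ≤ d := by rw [abs_sub_comm]; exact hd 0
          calc |u 0 + v 0| * |u 0 - v 0| ≤ (2*ρ) * d :=
                mul_le_mul h1 h2 (abs_nonneg _) (by positivity)
            _ = 2 * ρ * d := by ring
        have e1 : |(u 1)^2 - (v 1)^2| ≤ 2 * ρ * d := by
          rw [sq_sub_sq, abs_mul]
          have h1 : |u 1 + v 1| ≤ 2 * ρ :=
            le_trans (abs_add_le _ _) (by linarith [hcoord v hv' 1, hcoord u hu' 1])
          have h2 : |u 1 - v 1| ≤ d := by rw [abs_sub_comm]; exact hd 1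
          calc |u 1 + v 1| * |u 1 - v 1| ≤ (2*ρ) * d :=
                mul_le_mul h1 h2 (abs_nonneg _) (by positivity)
            _ = 2 * ρ * d := by ring
        calc |((u 0)^2 + (u 1)^2) - ((v 0)^2 + (v 1)^2)|
            ≤ |(u 0)^2 - (v 0)^2| + |(u 1)^2 - (v 1)^2| := by
              rw [show ((u 0)^2 + (u 1)^2) - ((v 0)^2 + (v 1)^2)
                  = ((u 0)^2 - (v 0)^2) + ((u 1)^2 - (v 1)^2) by ring]
              exact abs_add_le _ _
          _ ≤ 4 * ρ * d := by linarith
      nlinarith [hprod, hq, abs_nonneg (h v - h u)]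
    -- combine
    have hfd : dist (f v) (f u) ≤ 5 * d := by
      rw [hf]
      simp only []
      rw [b.repr.symm.dist_map]
      rw [EuclideanSpace.dist_eq]
      have hcomp : ∀ i : Fin 3,
          dist (((WithLp.equiv 2 (Fin 3 → ℝ)).symm ![h v, v 0, v 1]) i)
               (((WithLp.equiv 2 (Fin 3 → ℝ)).symm ![h u, u 0, u 1]) i)
          = |(![h v, v 0, v 1] : Fin 3 → ℝ) i - ![h u, u 0, u 1] i| := fun i => rfl
      rw [Fin.sum_univ_three]
      rw [hcomp 0, hcomp 1, hcomp 2]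
      simp only [Matrix.cons_val_zero, Matrix.cons_val_one, Matrix.head_cons,
        Matrix.cons_val_two, Matrix.tail_cons]
      have hle : |h v - h u|^2 + |v 0 - u 0|^2 + |v 1 - u 1|^2 ≤ (5*d)^2 := by
        nlinarith [abs_nonneg (h v - h u), abs_nonneg (v 0 - u 0), abs_nonneg (v 1 - u 1),
          hΔh, hd 0, hd 1]
      calc Real.sqrt (|h v - h u|^2 + |v 0 - u 0|^2 + |v 1 - u 1|^2)
          ≤ Real.sqrt ((5*d)^2) := Real.sqrt_le_sqrt hle
        _ = 5 * d := Real.sqrt_sq (by positivity)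
    simpa using hfd
  -- measure estimate
  calc μH[2] (f '' D) ≤ (5:ℝ≥0) ^ (2:ℝ) * μH[2] D :=
        hlip.hausdorffMeasure_image_le (by norm_num)
    _ ≤ (5:ℝ≥0) ^ (2:ℝ) * volume D := by
        rw [show (μH[2] : Measure (Fin 2 → ℝ)) = volume by
          rw [← MeasureTheory.hausdorffMeasure_pi_real]; norm_num]
    _ ≤ (5:ℝ≥0) ^ (2:ℝ) * volume (Set.Icc (fun _ : Fin 2 => -Real.sqrt r2) (fun _ => Real.sqrt r2)) := by
        gcongr
        intro z hz
        rw [Set.mem_Icc]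
        have key : ∀ i : Fin 2, |z i| ≤ Real.sqrt r2 := by
          intro i
          calc |z i| = Real.sqrt ((z i)^2) := (Real.sqrt_sq_eq_abs _).symm
            _ ≤ _ := Real.sqrt_le_sqrt (hsqD z hz i)
        constructor <;> intro i
        · exact neg_le_of_abs_le (key i)
        · exact le_of_abs_le (key i)
    _ ≤ ENNReal.ofReal (100 * ((1 - c^2) * ρ^2)) := by
        rw [Real.volume_Icc_pi]
        rw [Finset.prod_const]
        have hcard : (Finset.univ : Finset (Fin 2)).card = 2 := by simp
        rw [hcard]
        have hsq : Real.sqrt r2 - -Real.sqrt r2 = 2 * Real.sqrt r2 := by ring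
        rw [hsq]
        have h25 : ((5:ℝ≥0) : ℝ≥0∞) ^ (2:ℝ) = ENNReal.ofReal 25 := by
          rw [show (2:ℝ) = ((2:ℕ):ℝ) by norm_num, ENNReal.rpow_natCast]
          rw [show ((5:ℝ≥0) : ℝ≥0∞) = ENNReal.ofReal 5 by simp]
          rw [← ENNReal.ofReal_pow (by norm_num)]
          norm_num
        rw [h25, ← ENNReal.ofReal_pow (by positivity), ← ENNReal.ofReal_mul (by norm_num)]
        apply ENNReal.ofReal_le_ofReal
        have hs : (2 * Real.sqrt r2)^2 = 4 * r2 := by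
          rw [mul_pow, Real.sq_sqrt hr2nn]; norm_num
        rw [hs, hr2]
        nlinarith [mul_nonneg (show (0:ℝ) ≤ 1 - c^2 by nlinarith) (sq_nonneg ρ)]

lemma sphere_bound (ρ : ℝ) (hρ : 0 < ρ) :
    μH[2] (Metric.sphere (0 : E3) ρ) ≤ ENNReal.ofReal (450 * ρ^2) := by
  set A : Fin 3 → Set E3 := fun i =>
    {y : E3 | ‖y‖ = ρ ∧ (1/2) * ρ ≤ ⟪EuclideanSpace.single i (1:ℝ), y⟫} ∪
    {y : E3 | ‖y‖ = ρ ∧ (1/2) * ρ ≤ ⟪-EuclideanSpace.single i (1:ℝ), y⟫} with hA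
  have hcover : Metric.sphere (0 : E3) ρ ⊆ ⋃ i, A i := by
    intro y hy
    have hyn : ‖y‖ = ρ := by rwa [mem_sphere_zero_iff_norm] at hy
    have hsum : (y 0)^2 + (y 1)^2 + (y 2)^2 = ρ^2 := by
      have h2 : ‖y‖^2 = ρ^2 := by rw [hyn]
      rw [EuclideanSpace.norm_eq, Real.sq_sqrt (by positivity), Fin.sum_univ_three] at h2
      simpa [sq_abs] using h2
    have hex : ∃ i : Fin 3, ρ^2/4 ≤ (y i)^2 := by
      by_contra hcon
      push_neg at hcon
      have := hcon 0; have := hcon 1; have := hcon 2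
      nlinarith [sq_nonneg ρ]
    obtain ⟨i, hi⟩ := hex
    have habs : ρ/2 ≤ |y i| := by
      calc ρ/2 = Real.sqrt ((ρ/2)^2) := (Real.sqrt_sq (by positivity)).symm
        _ ≤ Real.sqrt ((y i)^2) := Real.sqrt_le_sqrt (by nlinarith)
        _ = |y i| := Real.sqrt_sq_eq_abs _
    rw [Set.mem_iUnion]
    refine ⟨i, ?_⟩
    rcases abs_cases (y i) with ⟨hc, _⟩ | ⟨hc, _⟩
    · left
      refine ⟨hyn, ?_⟩
      rw [EuclideanSpace.inner_single_left]
      simp only [map_one, one_mul]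
      rw [hc] at habs; linarith
    · right
      refine ⟨hyn, ?_⟩
      rw [inner_neg_left, EuclideanSpace.inner_single_left]
      simp only [map_one, one_mul]
      rw [hc] at habs; linarith
  refine le_trans (measure_mono hcover) (le_trans (measure_iUnion_le A) ?_)
  have hone : ∀ i : Fin 3, μH[2] (A i) ≤ ENNReal.ofReal (150 * ρ^2) := by
    intro i
    have h1 := cap_bound ρ (1/2) hρ (le_refl _) (by norm_num)
      (EuclideanSpace.single i (1:ℝ)) (by simp [EuclideanSpace.norm_single])
    have h2 := cap_bound ρ (1/2) hρ (le_refl _) (by norm_num)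
      (-EuclideanSpace.single i (1:ℝ)) (by simp [EuclideanSpace.norm_single])
    refine le_trans (measure_union_le _ _) ?_
    refine le_trans (add_le_add h1 h2) ?_
    rw [← ENNReal.ofReal_add (by positivity) (by positivity)]
    apply ENNReal.ofReal_le_ofReal
    nlinarith [sq_nonneg ρ]
  calc ∑' i : Fin 3, μH[2] (A i) = ∑ i : Fin 3, μH[2] (A i) := tsum_fintype _
    _ ≤ ∑ i : Fin 3, ENNReal.ofReal (150 * ρ^2) := Finset.sum_le_sum (fun i _ => hone i)
    _ = 3 * ENNReal.ofReal (150 * ρ^2) := by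
        rw [Finset.sum_const]; simp [mul_comm]
    _ ≤ ENNReal.ofReal (450 * ρ^2) := by
        rw [show (3:ℝ≥0∞) = ENNReal.ofReal 3 by simp]
        rw [← ENNReal.ofReal_mul (by norm_num)]
        apply ENNReal.ofReal_le_ofReal; nlinarith [sq_nonneg ρ]

lemma capset_bound (ρ u : ℝ) (hρ : 0 < ρ) (hu : 0 ≤ u) (e : E3) (he : ‖e‖ = 1) :
    μH[2] {y : E3 | ‖y‖ = ρ ∧ (1 - u) * ρ ≤ ⟪e, y⟫} ≤ ENNReal.ofReal (900 * ρ^2 * u) := by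
  rcases le_or_gt u (1/2) with hu2 | hu2
  · refine le_trans (cap_bound ρ (1-u) hρ (by linarith) (by linarith) e he) ?_
    apply ENNReal.ofReal_le_ofReal
    nlinarith [sq_nonneg ρ, mul_nonneg hu (sq_nonneg ρ), mul_nonneg (mul_nonneg hu hu) (sq_nonneg ρ)]
  · have hsub : {y : E3 | ‖y‖ = ρ ∧ (1 - u) * ρ ≤ ⟪e, y⟫} ⊆ Metric.sphere (0:E3) ρ := by
      rintro y ⟨hy, _⟩
      rwa [mem_sphere_zero_iff_norm]
    refine le_trans (measure_mono hsub) (le_trans (sphere_bound ρ hρ) ?_)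
    apply ENNReal.ofReal_le_ofReal
    nlinarith [sq_nonneg ρ]

set_option maxHeartbeats 1000000 in
theorem stmt14 :
    ∃ C > (0 : ℝ), ∀ (x : EuclideanSpace ℝ (Fin 3)) (ρ : ℝ), 1 < ρ → ρ ≤ 2 * ‖x‖ / 3 →
      (∫ y in Metric.sphere (0 : EuclideanSpace ℝ (Fin 3)) ρ,
          Real.exp (-‖x - y‖ - ‖y‖) ∂(μH[2])) ≤ C * ρ * Real.exp (-‖x‖) := by
  refine ⟨3600, by norm_num, ?_⟩
  intro x ρ hρ1 hρx
  have hρ0 : 0 < ρ := lt_trans one_pos hρ1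
  have hx : 0 < ‖x‖ := by nlinarith
  have hxne : x ≠ 0 := by intro hx0; rw [hx0] at hx; simp at hx
  set S := Metric.sphere (0 : E3) ρ with hS
  set μ : Measure E3 := (μH[2] : Measure E3).restrict S with hμ
  set e : E3 := ‖x‖⁻¹ • x with heq
  have he : ‖e‖ = 1 := norm_smul_inv_norm hxne
  set g' : E3 → ℝ := fun y => Real.exp (-(ρ * (1 - ⟪x, y⟫ / (‖x‖ * ρ)))) with hg'
  have hg'cont : Continuous g' := by
    apply Real.continuous_exp.comp
    apply Continuous.neg
    apply Continuous.mul continuous_const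
    apply Continuous.sub continuous_const
    exact (Continuous.inner continuous_const continuous_id).div_const _
  have hSmeas : MeasurableSet S := Metric.isClosed_sphere.measurableSet
  haveI : IsFiniteMeasure μ := by
    constructor
    rw [hμ, Measure.restrict_apply_univ]
    exact lt_of_le_of_lt (sphere_bound ρ hρ0) ENNReal.ofReal_lt_top
  have hg'le1 : ∀ y ∈ S, g' y ≤ 1 := by
    intro y hy
    have hyn : ‖y‖ = ρ := by rwa [mem_sphere_zero_iff_norm] at hy
    have hinner : ⟪x, y⟫ ≤ ‖x‖ * ρ := by
      calc ⟪x, y⟫ ≤ ‖x‖ * ‖y‖ := real_inner_le_norm x y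
        _ = ‖x‖ * ρ := by rw [hyn]
    have hd1 : ⟪x, y⟫ / (‖x‖ * ρ) ≤ 1 := by
      apply div_le_one_of_le₀ hinner (by positivity)
    calc g' y = Real.exp (-(ρ * (1 - ⟪x, y⟫ / (‖x‖ * ρ)))) := rfl
      _ ≤ Real.exp 0 := Real.exp_le_exp.mpr (by nlinarith)
      _ = 1 := Real.exp_zero
  have hg'int : Integrable g' μ := by
    refine Integrable.mono' (integrable_const (1:ℝ)) hg'cont.aestronglyMeasurable ?_
    rw [hμ]
    refine ae_restrict_of_forall_mem hSmeas ?_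
    intro y hy
    rw [Real.norm_eq_abs, abs_of_pos (Real.exp_pos _)]
    exact hg'le1 y hy
  -- pointwise bound
  have hpt : ∀ y ∈ S, Real.exp (-‖x - y‖ - ‖y‖) ≤ Real.exp (-‖x‖) * g' y := by
    intro y hy
    have hyn : ‖y‖ = ρ := by rwa [mem_sphere_zero_iff_norm] at hy
    rw [hg']
    simp only []
    rw [← Real.exp_add]
    apply Real.exp_le_exp.mpr
    have hkey : ‖x‖^2 - ⟪x, y⟫ ≤ ‖x‖ * ‖x - y‖ := by
      have h1 : ⟪x, x - y⟫ ≤ ‖x‖ * ‖x - y‖ := real_inner_le_norm x (x - y)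
      have h2 : ⟪x, x - y⟫ = ‖x‖^2 - ⟪x, y⟫ := by
        rw [inner_sub_right, real_inner_self_eq_norm_sq]
      linarith
    have hxne' : ‖x‖ ≠ 0 := ne_of_gt hx
    have hρne : ρ ≠ 0 := ne_of_gt hρ0
    have hdiv : ‖x‖ - ⟪x, y⟫ / ‖x‖ ≤ ‖x - y‖ := by
      have h3 : ‖x‖ - ⟪x, y⟫ / ‖x‖ = (‖x‖^2 - ⟪x, y⟫) / ‖x‖ := by
        field_simp
      rw [h3, div_le_iff₀ hx]
      nlinarith [hkey]
    have hq : ρ * (⟪x, y⟫ / (‖x‖ * ρ)) = ⟪x, y⟫ / ‖x‖ := by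
      field_simp
    rw [hyn]
    nlinarith [hdiv, hq]
  -- integral comparison
  have step1 : (∫ y, Real.exp (-‖x - y‖ - ‖y‖) ∂μ) ≤ ∫ y, Real.exp (-‖x‖) * g' y ∂μ := by
    apply integral_mono_of_nonneg
    · exact Filter.Eventually.of_forall (fun y => (Real.exp_pos _).le)
    · exact hg'int.const_mul _
    · rw [hμ]
      refine ae_restrict_of_forall_mem hSmeas ?_
      exact hpt
  have step2 : (∫ y, Real.exp (-‖x‖) * g' y ∂μ) = Real.exp (-‖x‖) * ∫ y, g' y ∂μ :=
    integral_const_mul _ _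
  -- layer cake
  have hlc : ∫ y, g' y ∂μ = ∫ s in Set.Ioi (0:ℝ), (μ {a | s < g' a}).toReal :=
    hg'int.integral_eq_integral_meas_lt
      (Filter.Eventually.of_forall (fun y => (Real.exp_pos _).le))
  set ψ : ℝ → ℝ := Set.indicator (Set.Ioc 0 1) (fun s => 1800 * ρ * s ^ (-(1/2) : ℝ)) with hψ
  have hψint : Integrable ψ (volume.restrict (Set.Ioi (0:ℝ))) := by
    apply Integrable.restrict
    have hIO : IntegrableOn (fun s : ℝ => 1800 * ρ * s ^ (-(1/2) : ℝ)) (Set.Ioc 0 1) volume := by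
      have h0 : IntegrableOn (fun s : ℝ => s ^ (-(1/2) : ℝ)) (Set.Ioc 0 1) volume := by
        have := intervalIntegral.intervalIntegrable_rpow' (a := 0) (b := 1) (show (-1:ℝ) < -(1/2) by norm_num)
        rwa [intervalIntegrable_iff_integrableOn_Ioc_of_le (by norm_num)] at this
      exact h0.const_mul _
    exact hIO.integrable_indicator measurableSet_Ioc
  have hbound : ∀ s ∈ Set.Ioi (0:ℝ), (μ {a | s < g' a}).toReal ≤ ψ s := by
    intro s hs
    have hs0 : 0 < s := hs
    have hμset : μ {a | s < g' a} = μH[2] ({a | s < g' a} ∩ S) := by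
      rw [hμ, Measure.restrict_apply (measurableSet_lt measurable_const hg'cont.measurable)]
    rcases le_or_gt s 1 with hs1 | hs1
    · -- main case
      set L := Real.log s⁻¹ with hL
      have hlogs : Real.log s ≤ 0 := Real.log_nonpos hs0.le hs1
      have hL0 : 0 ≤ L := by rw [hL, Real.log_inv]; linarith
      set u := L / ρ with hu
      have hu0 : 0 ≤ u := div_nonneg hL0 hρ0.le
      have hxne' : ‖x‖ ≠ 0 := ne_of_gt hx
      have hρne : ρ ≠ 0 := ne_of_gt hρ0
      have hsub : {a | s < g' a} ∩ S ⊆ {y : E3 | ‖y‖ = ρ ∧ (1 - u) * ρ ≤ ⟪e, y⟫} := by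
        rintro y ⟨hy1, hy2⟩
        have hyn : ‖y‖ = ρ := mem_sphere_zero_iff_norm.mp hy2
        refine ⟨hyn, ?_⟩
        have hlog : Real.log s < -(ρ * (1 - ⟪x, y⟫ / (‖x‖ * ρ))) :=
          (Real.log_lt_iff_lt_exp hs0).mpr hy1
        have hq : ρ * (⟪x, y⟫ / (‖x‖ * ρ)) = ⟪x, y⟫ / ‖x‖ := by
          field_simp
        have hip : ⟪e, y⟫ = ⟪x, y⟫ / ‖x‖ := by
          rw [heq, real_inner_smul_left, div_eq_inv_mul]
        have huρ : (1 - u) * ρ = ρ - L := by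
          rw [hu]; field_simp
        have hLs : L = -Real.log s := by rw [hL, Real.log_inv]
        rw [hip, huρ]
        nlinarith [hlog, hq, hLs]
      rw [hμset]
      have hcap := capset_bound ρ u hρ0 hu0 e he
      have hle2 : μH[2] ({a | s < g' a} ∩ S) ≤ ENNReal.ofReal (900 * ρ^2 * u) :=
        le_trans (measure_mono hsub) hcap
      have hle3 : (μH[2] ({a | s < g' a} ∩ S)).toReal ≤ 900 * ρ^2 * u :=
        ENNReal.toReal_le_of_le_ofReal (by positivity) hle2
      refine le_trans hle3 ?_
      rw [hψ, Set.indicator_of_mem (Set.mem_Ioc.mpr ⟨hs0, hs1⟩)]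
      have hz : 0 < s ^ (-(1/2) : ℝ) := Real.rpow_pos_of_pos hs0 _
      have hzsq : (s ^ (-(1/2) : ℝ))^2 = s⁻¹ := by
        rw [← Real.rpow_natCast (s ^ (-(1/2) : ℝ)) 2, ← Real.rpow_mul hs0.le]
        norm_num
        exact Real.rpow_neg_one s
      have hLz : L ≤ 2 * s ^ (-(1/2) : ℝ) := by
        have h1 : Real.log ((s ^ (-(1/2) : ℝ))^2) = 2 * Real.log (s ^ (-(1/2) : ℝ)) := by
          rw [Real.log_pow]; push_cast; ring
        have h2 : Real.log (s ^ (-(1/2) : ℝ)) ≤ s ^ (-(1/2) : ℝ) - 1 :=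
          Real.log_le_sub_one_of_pos hz
        rw [hL, ← hzsq, h1]; linarith
      have hueq : 900 * ρ^2 * u = 900 * ρ * L := by
        rw [hu]; field_simp
      rw [hueq]
      nlinarith [hρ0, hLz, hL0]
    · -- s > 1 : empty set
      have hempty : {a | s < g' a} ∩ S = ∅ := by
        ext y
        simp only [Set.mem_inter_iff, Set.mem_setOf_eq, Set.mem_empty_iff_false, iff_false]
        rintro ⟨h1, h2⟩
        exact absurd (lt_of_lt_of_le h1 (hg'le1 y h2)) (not_lt.mpr hs1.le)
      rw [hμset, hempty]
      simp only [measure_empty, ENNReal.toReal_zero]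
      exact Set.indicator_nonneg (fun t ht => by have h0t : (0:ℝ) < t := ht.1; positivity) s
  -- finish
  have hψval : (∫ s in Set.Ioi (0:ℝ), ψ s) = 3600 * ρ := by
    rw [hψ]
    rw [setIntegral_indicator measurableSet_Ioc]
    rw [show Set.Ioi (0:ℝ) ∩ Set.Ioc 0 1 = Set.Ioc 0 1 by
      rw [Set.inter_eq_self_of_subset_right Set.Ioc_subset_Ioi_self]]
    rw [← intervalIntegral.integral_of_le (by norm_num : (0:ℝ) ≤ 1)]
    rw [intervalIntegral.integral_const_mul]
    rw [integral_rpow (Or.inl (by norm_num : (-1:ℝ) < -(1/2)))]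
    rw [Real.zero_rpow (by norm_num), Real.one_rpow]
    ring
  have hint2 : (∫ y, g' y ∂μ) ≤ 3600 * ρ := by
    rw [hlc, ← hψval]
    apply integral_mono_of_nonneg
    · exact Filter.Eventually.of_forall (fun s => ENNReal.toReal_nonneg)
    · exact hψint
    · exact (ae_restrict_iff' measurableSet_Ioi).mpr (Filter.Eventually.of_forall hbound)
  calc (∫ y, Real.exp (-‖x - y‖ - ‖y‖) ∂μ) ≤ Real.exp (-‖x‖) * ∫ y, g' y ∂μ := by
        rw [← step2]; exact step1
    _ ≤ Real.exp (-‖x‖) * (3600 * ρ) := by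
        apply mul_le_mul_of_nonneg_left hint2 (Real.exp_pos _).le
    _ = 3600 * ρ * Real.exp (-‖x‖) := by ring
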